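/- Regard V as a K-vector space via η, let g denote the hyperbolic form g((w₁,θ₁),(w₂,θ₂)) := θ₁(w₂) + θ₂(w₁) on V, and for t ∈ K_- := {t ∈ K : ι(t) = −t} define H_t(x,y) := −t²·g(x,y) + t·g(η_t(x), y). Let Y ⊆ U* be an F-subspace which is isotropic for Θ, i.e. θ'(θ⌟Θ) = 0 for all θ, θ' ∈ Y. Then the η(K)-span Z of {(0,θ) : θ ∈ Y} in V satisfies H_t(z, z') = 0 for all z, z' ∈ Z and all t ∈ K_-, and dim_K Z = dim_F Y. In particular, if dim_F Y = (dim_F U)/2 then each H_t admits an isotropic K-subspace of half the K-dimension of V, i.e. H_t is of split type. -/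

import Mathlib

/-!
Setup: `F` a field of characteristic zero, `q ∈ F` with `−q` not a square, `K = F(√−q)`
(generated over `F` by `s` with `s² = −q`) with nontrivial `F`-automorphism `ι`; `U` a
finite-dimensional `F`-vector space, `V := U × U*`, `V_K := K ⊗[F] V`, `σ := ι ⊗ id`;
`Θ ∈ ∧²U` nondegenerate with contraction `c : U* → U` (`ι(c θ) = θ⌟Θ`); `W ⊆ V_K` the
graph of the `K`-linear extension of `θ ↦ −s·(c θ)`, and `η : K → End_F(V)` the
`F`-algebra embedding determined by `W` (acting as `t` on `W`, as `ι(t)` on `σ(W)`, and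
preserving `V = 1 ⊗ V`); `ηbar` is its restriction to `V`, making `V` a `K`-vector space.
`g` is the hyperbolic form `g((w₁,θ₁),(w₂,θ₂)) = θ₁(w₂) + θ₂(w₁)` on `V` and, for
`t ∈ K_-`, `H_t(x,y) := −t²·g(x,y) + t·g(η_t(x), y)`.
-/

open scoped TensorProduct

/-- The `ι`-semilinear automorphism `σ := ι ⊗ id_V` of `V_K = K ⊗[F] V`. -/
noncomputable def sigmaMap (F : Type*) [Field F] (K : Type*) [Field K] [Algebra F K]
    (V : Type*) [AddCommGroup V] [Module F V] (ι : K ≃ₐ[F] K) :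
    K ⊗[F] V →ₗ[F] K ⊗[F] V :=
  TensorProduct.map ι.toLinearMap LinearMap.id

/-- The graph `W = {(−s·(θ⌟Θ)_K, θ) : θ ∈ K ⊗ U*} ⊆ V_K` of the `K`-linear extension of
`θ ↦ −s·(c θ)`, realized as the `K`-span of its values on `1 ⊗ U*`. -/
noncomputable def Wgraph (F : Type*) [Field F] (K : Type*) [Field K] [Algebra F K] (s : K)
    (U : Type*) [AddCommGroup U] [Module F U] (c : Module.Dual F U →ₗ[F] U) :
    Submodule K (K ⊗[F] (U × Module.Dual F U)) :=
  Submodule.span K (Set.range fun θ : Module.Dual F U =>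
    (-s) • ((1 : K) ⊗ₜ[F] ((c θ, 0) : U × Module.Dual F U))
      + (1 : K) ⊗ₜ[F] (((0 : U), θ) : U × Module.Dual F U))

/-- The hyperbolic symmetric bilinear form `g((w₁,θ₁),(w₂,θ₂)) := θ₁(w₂) + θ₂(w₁)` on
`V = U × U*`. -/
noncomputable def hypForm (F : Type*) [Field F] (U : Type*) [AddCommGroup U] [Module F U] :
    (U × Module.Dual F U) →ₗ[F] (U × Module.Dual F U) →ₗ[F] F :=
  LinearMap.mk₂ F (fun v w => v.2 w.1 + w.2 v.1)
    (fun v v' w => by simp; ring)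
    (fun a v w => by simp [smul_eq_mul]; ring)
    (fun v w w' => by simp; ring)
    (fun a v w => by simp [smul_eq_mul]; ring)

lemma aux_one_tmul_inj (F : Type*) [Field F] (K : Type*) [Field K] [Algebra F K]
    (V : Type*) [AddCommGroup V] [Module F V] :
    Function.Injective (fun v : V => (1 : K) ⊗ₜ[F] v) := by
  have h1 : Function.Injective (LinearMap.rTensor V (Algebra.linearMap F K)) :=
    Module.Flat.rTensor_preserves_injective_linearMap _ (algebraMap F K).injective
  have h2 : Function.Injective ((TensorProduct.lid F V).symm) :=
    (TensorProduct.lid F V).symm.injective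
  have : (fun v : V => (1 : K) ⊗ₜ[F] v)
      = (LinearMap.rTensor V (Algebra.linearMap F K)) ∘ (TensorProduct.lid F V).symm := by
    funext v
    simp [TensorProduct.lid_symm_apply]
  rw [this]
  exact h1.comp h2

lemma aux_repr (F : Type*) [Field F] (K : Type*) [Field K] [Algebra F K] (q : F)
    (s : K) (hs : s ^ 2 = algebraMap F K (-q))
    (hgen : Algebra.adjoin F ({s} : Set K) = ⊤) (t : K) :
    ∃ a b : F, t = algebraMap F K a + b • s := by
  let A : Subalgebra F K :=
    { carrier := {t | ∃ a b : F, t = algebraMap F K a + b • s}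
      add_mem' := by
        rintro x y ⟨a, b, rfl⟩ ⟨a', b', rfl⟩
        exact ⟨a + a', b + b', by rw [map_add, add_smul]; ring⟩
      mul_mem' := by
        rintro x y ⟨a, b, rfl⟩ ⟨a', b', rfl⟩
        refine ⟨a * a' - q * (b * b'), a * b' + a' * b, ?_⟩
        simp only [Algebra.smul_def, map_add, map_mul, map_sub, map_neg]
        ring_nf
        rw [hs]
        simp only [map_neg, map_mul]
        ring
      algebraMap_mem' := fun a => ⟨a, 0, by simp⟩ }
  have hsA : s ∈ A := ⟨0, 1, by simp⟩
  have : Algebra.adjoin F ({s} : Set K) ≤ A := Algebra.adjoin_le (by simpa using hsA)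
  rw [hgen] at this
  exact this (Algebra.mem_top)

lemma aux_iota (F : Type*) [Field F] (K : Type*) [Field K] [Algebra F K] (q : F)
    (s : K) (hs : s ^ 2 = algebraMap F K (-q))
    (hgen : Algebra.adjoin F ({s} : Set K) = ⊤)
    (ι : K ≃ₐ[F] K) (hι : ι ≠ AlgEquiv.refl) : ι s = -s := by
  have h2 : (ι s) ^ 2 = s ^ 2 := by rw [← map_pow, hs, AlgEquiv.commutes]
  have h3 : (ι s - s) * (ι s + s) = 0 := by ring_nf; linear_combination h2
  rcases mul_eq_zero.1 h3 with h | h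
  · exfalso
    apply hι
    have : ι.toAlgHom = AlgHom.id F K := by
      apply AlgHom.ext_of_adjoin_eq_top hgen
      intro x hx
      rcases hx with rfl
      simpa [sub_eq_zero] using (sub_eq_zero.1 h)
    ext x
    exact AlgHom.congr_fun this x
  · exact eq_neg_of_add_eq_zero_left h


set_option maxHeartbeats 1000000 in
/-- let `Y ⊆ U*` be an `F`-subspace isotropic for `Θ` and `Z ⊆ V` the
`η(K)`-span of `{(0,θ) : θ ∈ Y}`.  Then `Z` is `H_t`-isotropic for every `t ∈ K_-`, `Z` is
an `η(K)`-subspace, and `dim_K Z = dim_F Y` (equivalently `dim_F Z = 2·dim_F Y`); in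
particular if `dim_F Y = (dim_F U)/2` then `Z` is an isotropic `K`-subspace of half the
`K`-dimension of `V`, i.e. each `H_t` is of split type. -/
theorem stmt18 (F : Type*) [Field F] [CharZero F] (q : F) (hq : ∀ x : F, x ^ 2 ≠ -q)
    (K : Type*) [Field K] [Algebra F K] (s : K) (hs : s ^ 2 = algebraMap F K (-q))
    (hgen : Algebra.adjoin F ({s} : Set K) = ⊤)
    (ι : K ≃ₐ[F] K) (hι : ι ≠ AlgEquiv.refl)
    (U : Type*) [AddCommGroup U] [Module F U] [FiniteDimensional F U]
    (Θ : ExteriorAlgebra F U)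
    (hΘ : Θ ∈ (LinearMap.range (ExteriorAlgebra.ι F : U →ₗ[F] ExteriorAlgebra F U)) ^ 2)
    (c : Module.Dual F U →ₗ[F] U)
    (hc : ∀ θ : Module.Dual F U,
      ExteriorAlgebra.ι F (c θ) =
        CliffordAlgebra.contractLeft (Q := (0 : QuadraticForm F U)) θ Θ)
    (hcnd : Function.Bijective c)
    (η : K → Module.End F (K ⊗[F] (U × Module.Dual F U)))
    (hη1 : ∀ t : K, ∀ x ∈ Wgraph F K s U c, η t x = t • x)
    (hη2 : ∀ t : K, ∀ x ∈ Wgraph F K s U c,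
      η t (sigmaMap F K (U × Module.Dual F U) ι x)
        = ι t • sigmaMap F K (U × Module.Dual F U) ι x)
    (ηbar : K →ₐ[F] Module.End F (U × Module.Dual F U))
    (hlink : ∀ (t : K) (v : U × Module.Dual F U),
      η t ((1 : K) ⊗ₜ[F] v) = (1 : K) ⊗ₜ[F] (ηbar t v))
    (Y : Submodule F (Module.Dual F U))
    (hY : ∀ θ ∈ Y, ∀ θ' ∈ Y, θ' (c θ) = 0) :
    let Z : Submodule F (U × Module.Dual F U) :=
      Submodule.span F {v | ∃ t : K, ∃ θ ∈ Y, v = ηbar t ((0 : U), θ)}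
    (∀ t : K, ι t = -t → ∀ z ∈ Z, ∀ z' ∈ Z,
      -(t ^ 2) * algebraMap F K (hypForm F U z z')
        + t * algebraMap F K (hypForm F U (ηbar t z) z') = 0)
    ∧ (∀ t : K, Z.map (ηbar t) ≤ Z)
    ∧ Module.finrank F Z = 2 * Module.finrank F Y
    ∧ (2 * Module.finrank F Y = Module.finrank F U →
        2 * Module.finrank F Z = Module.finrank F (U × Module.Dual F U)) := by
  
  intro Z
  have hq0 : q ≠ 0 := fun h => hq 0 (by simp [h])
  have hιs : ι s = -s := aux_iota F K q s hs hgen ι hι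
  have hinj := aux_one_tmul_inj F K (U × Module.Dual F U)
  -- σ on K-multiples of 1 ⊗ v
  have hσ : ∀ (k : K) (v : U × Module.Dual F U),
      sigmaMap F K (U × Module.Dual F U) ι (k • ((1:K) ⊗ₜ[F] v)) = ι k • ((1:K) ⊗ₜ[F] v) := by
    intro k v
    rw [TensorProduct.smul_tmul', smul_eq_mul, mul_one,
      TensorProduct.smul_tmul', smul_eq_mul, mul_one]
    simp [sigmaMap]
  -- key computation: ηbar s (0, θ) = (q • c θ, 0)
  have hbs : ∀ θ : Module.Dual F U, ηbar s ((0 : U), θ) = (q • c θ, (0 : Module.Dual F U)) := by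
    intro θ
    set a1 : K ⊗[F] (U × Module.Dual F U) := (1:K) ⊗ₜ[F] ((c θ, 0) : U × Module.Dual F U) with ha1
    set a0 : K ⊗[F] (U × Module.Dual F U) := (1:K) ⊗ₜ[F] (((0:U), θ) : U × Module.Dual F U) with ha0
    set w : K ⊗[F] (U × Module.Dual F U) := (-s) • a1 + a0 with hwdef
    have hw : w ∈ Wgraph F K s U c := Submodule.subset_span ⟨θ, rfl⟩
    have hσw : sigmaMap F K (U × Module.Dual F U) ι w = s • a1 + a0 := by
      rw [hwdef, map_add, hσ]
      have : sigmaMap F K (U × Module.Dual F U) ι a0 = a0 := by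
        have := hσ 1 (((0:U), θ) : U × Module.Dual F U)
        simpa using this
      rw [this, map_neg, hιs, neg_neg]
    have h1 := hη1 s w hw
    have h2 := hη2 s w hw
    rw [hσw, hιs] at h2
    -- η s (w + σ w) two ways
    have hsum : w + (s • a1 + a0) = a0 + a0 := by
      rw [hwdef]; module
    have hL : η s w + η s (s • a1 + a0)
        = (1:K) ⊗ₜ[F] (ηbar s ((0:U), θ)) + (1:K) ⊗ₜ[F] (ηbar s ((0:U), θ)) := by
      rw [← map_add, hsum, map_add, ha0, hlink]
    rw [h1, h2] at hL
    have hR : s • w + -s • (s • a1 + a0) = (algebraMap F K (q + q)) • a1 := by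
      rw [hwdef]
      have hs' : s ^ 2 = -(algebraMap F K q) := by rw [hs, map_neg]
      match_scalars
      · linear_combination (-2 : K) * hs'
      · ring
    rw [hR] at hL
    have hL' : (1:K) ⊗ₜ[F] ((q + q) • ((c θ, 0) : U × Module.Dual F U))
        = (1:K) ⊗ₜ[F] (ηbar s ((0:U), θ) + ηbar s ((0:U), θ)) := by
      rw [TensorProduct.tmul_add]
      rw [← hL, ha1, algebraMap_smul, TensorProduct.tmul_smul]
    have hL'' := hinj hL'
    have h2s : (2:F) • ((q • c θ, (0:Module.Dual F U)) : U × Module.Dual F U)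
        = (2:F) • ηbar s ((0:U), θ) := by
      rw [two_smul, two_smul, ← hL'']
      ext <;> simp [add_smul] <;> module
    exact (smul_right_injective _ (two_ne_zero)) h2s.symm
  -- ηbar s (c θ, 0) = (0, -θ)
  have hbc : ∀ θ : Module.Dual F U, ηbar s (c θ, (0 : Module.Dual F U)) = ((0:U), -θ) := by
    intro θ
    have h1 : ηbar s (ηbar s ((0:U), θ)) = (-q) • ((0:U), θ) := by
      rw [← Module.End.mul_apply, ← map_mul, ← pow_two, hs, AlgHom.commutes,
        Module.algebraMap_end_apply]
    rw [hbs θ] at h1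
    have h2 : q • ηbar s (c θ, (0:Module.Dual F U)) = q • (((0:U), -θ) : U × Module.Dual F U) := by
      have := (ηbar s).map_smul q ((c θ, (0:Module.Dual F U)) : U × Module.Dual F U)
      rw [Prod.smul_mk, smul_zero] at this
      rw [← this, h1]
      ext <;> simp
    exact smul_right_injective _ hq0 h2
  -- general form of ηbar t
  have hform : ∀ (t : K) (v : U × Module.Dual F U),
      ∃ a b : F, ηbar t v = a • v + b • ηbar s v := by
    intro t v
    obtain ⟨a, b, rfl⟩ := aux_repr F K q s hs hgen t
    refine ⟨a, b, ?_⟩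
    rw [map_add, AlgHom.commutes, map_smul]
    simp [Module.algebraMap_end_apply]
  -- membership characterizations
  have hmem' : ∀ θ₁ ∈ Y, ∀ θ₂ ∈ Y, ((c θ₁, θ₂) : U × Module.Dual F U) ∈ Z := by
    intro θ₁ hθ₁ θ₂ hθ₂
    have m2 : (((0:U), θ₂) : U × Module.Dual F U) ∈ Z := by
      apply Submodule.subset_span
      exact ⟨1, θ₂, hθ₂, by simp⟩
    have m1 : ((c θ₁, (0:Module.Dual F U)) : U × Module.Dual F U) ∈ Z := by
      have hz : ηbar s ((0:U), θ₁) ∈ Z := Submodule.subset_span ⟨s, θ₁, hθ₁, rfl⟩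
      have : ((c θ₁, (0:Module.Dual F U)) : U × Module.Dual F U) = q⁻¹ • ηbar s ((0:U), θ₁) := by
        rw [hbs θ₁]
        ext <;> simp [smul_smul, inv_mul_cancel₀ hq0]
      rw [this]
      exact Z.smul_mem _ hz
    have : ((c θ₁, θ₂) : U × Module.Dual F U)
        = (c θ₁, (0:Module.Dual F U)) + ((0:U), θ₂) := by simp
    rw [this]
    exact Z.add_mem m1 m2
  have hmem : ∀ z ∈ Z, ∃ θ₁ ∈ Y, ∃ θ₂ ∈ Y, z = ((c θ₁, θ₂) : U × Module.Dual F U) := by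
    intro z hz
    induction hz using Submodule.span_induction with
    | mem x hx =>
      obtain ⟨t, θ, hθ, rfl⟩ := hx
      obtain ⟨a, b, hab⟩ := hform t ((0:U), θ)
      refine ⟨(b * q) • θ, Y.smul_mem _ hθ, a • θ, Y.smul_mem _ hθ, ?_⟩
      rw [hab, hbs θ]
      ext <;> simp [map_smul, smul_smul] <;> ring_nf
    | zero => exact ⟨0, Y.zero_mem, 0, Y.zero_mem, by ext <;> simp⟩
    | add x y hx hy ihx ihy =>
      obtain ⟨θ₁, h1, θ₂, h2, rfl⟩ := ihx
      obtain ⟨θ₁', h1', θ₂', h2', rfl⟩ := ihy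
      exact ⟨θ₁ + θ₁', Y.add_mem h1 h1', θ₂ + θ₂', Y.add_mem h2 h2', by simp⟩
    | smul r x hx ihx =>
      obtain ⟨θ₁, h1, θ₂, h2, rfl⟩ := ihx
      exact ⟨r • θ₁, Y.smul_mem _ h1, r • θ₂, Y.smul_mem _ h2, by simp⟩
  -- stability
  have hstab : ∀ (t : K), ∀ z ∈ Z, ηbar t z ∈ Z := by
    intro t z hz
    obtain ⟨θ₁, h1, θ₂, h2, rfl⟩ := hmem z hz
    obtain ⟨a, b, hab⟩ := hform t (c θ₁, θ₂)
    have hsv : ηbar s ((c θ₁, θ₂) : U × Module.Dual F U) = (q • c θ₂, -θ₁) := by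
      have : ((c θ₁, θ₂) : U × Module.Dual F U)
          = (c θ₁, (0:Module.Dual F U)) + ((0:U), θ₂) := by simp
      rw [this, map_add, hbc θ₁, hbs θ₂]
      ext <;> simp
    have : ηbar t ((c θ₁, θ₂) : U × Module.Dual F U)
        = (c (a • θ₁ + (b * q) • θ₂), a • θ₂ - b • θ₁) := by
      rw [hab, hsv]
      ext <;> simp [map_smul, smul_smul] <;> ring_nf
    rw [this]
    exact hmem' _ (Y.add_mem (Y.smul_mem _ h1) (Y.smul_mem _ h2)) _
      (Y.sub_mem (Y.smul_mem _ h2) (Y.smul_mem _ h1))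
  -- g vanishes on Z × Z
  have hgZ : ∀ z ∈ Z, ∀ z' ∈ Z, hypForm F U z z' = 0 := by
    intro z hz z' hz'
    obtain ⟨θ₁, h1, θ₂, h2, rfl⟩ := hmem z hz
    obtain ⟨θ₁', h1', θ₂', h2', rfl⟩ := hmem z' hz'
    simp [hypForm, hY θ₁' h1' θ₂ h2, hY θ₁ h1 θ₂' h2']
  refine ⟨?_, ?_, ?_, ?_⟩
  · intro t _ z hz z' hz'
    rw [hgZ z hz z' hz', hgZ _ (hstab t z hz) z' hz']
    simp
  · intro t x hx
    rcases Submodule.mem_map.1 hx with ⟨z, hz, rfl⟩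
    exact hstab t z hz
  · -- finrank
    haveI : Module.Free F ↥Y := Module.Free.of_divisionRing F ↥Y
    haveI : FiniteDimensional F ↥Y := FiniteDimensional.finiteDimensional_submodule Y
    let f : (↥Y × ↥Y) →ₗ[F] (U × Module.Dual F U) := (c.comp Y.subtype).prodMap Y.subtype
    have hfinj : Function.Injective f := by
      rw [LinearMap.coe_prodMap]
      exact (hcnd.1.comp Y.injective_subtype).prodMap Y.injective_subtype
    have hrange : LinearMap.range f = Z := by
      apply le_antisymm
      · rintro x ⟨⟨y1, y2⟩, rfl⟩
        exact hmem' y1 y1.2 y2 y2.2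
      · intro z hz
        obtain ⟨θ₁, h1, θ₂, h2, rfl⟩ := hmem z hz
        exact ⟨(⟨θ₁, h1⟩, ⟨θ₂, h2⟩), rfl⟩
    have e1 : Module.finrank F (↥Y × ↥Y) = Module.finrank F Z := by
      rw [← hrange]
      exact (LinearEquiv.ofInjective f hfinj).finrank_eq
    rw [← e1, Module.finrank_prod, two_mul]
  · intro h
    have e2 : Module.finrank F (U × Module.Dual F U)
        = Module.finrank F U + Module.finrank F U := by
      rw [Module.finrank_prod, Subspace.dual_finrank_eq]
    haveI : Module.Free F ↥Y := Module.Free.of_divisionRing F ↥Y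
    haveI : FiniteDimensional F ↥Y := FiniteDimensional.finiteDimensional_submodule Y
    have e3 : Module.finrank F Z = 2 * Module.finrank F Y := by
      let f : (↥Y × ↥Y) →ₗ[F] (U × Module.Dual F U) := (c.comp Y.subtype).prodMap Y.subtype
      have hfinj : Function.Injective f := by
        rw [LinearMap.coe_prodMap]
        exact (hcnd.1.comp Y.injective_subtype).prodMap Y.injective_subtype
      have hrange : LinearMap.range f = Z := by
        apply le_antisymm
        · rintro x ⟨⟨y1, y2⟩, rfl⟩
          exact hmem' y1 y1.2 y2 y2.2
        · intro z hz
          obtain ⟨θ₁, h1, θ₂, h2, rfl⟩ := hmem z hz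
          exact ⟨(⟨θ₁, h1⟩, ⟨θ₂, h2⟩), rfl⟩
      have e1 : Module.finrank F (↥Y × ↥Y) = Module.finrank F Z := by
        rw [← hrange]
        exact (LinearEquiv.ofInjective f hfinj).finrank_eq
      rw [← e1, Module.finrank_prod, two_mul]
    rw [e2, e3]
    omega
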